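/- arXiv:math/0403455 — 6 statements merged into one kernel-verified Lean document; each statement's English description precedes it below -/
import Mathlib

section
/- Let R be a commutative ring and J an ideal of R. For i ≥ 1 define K^i = {A ∈ GL_n(R) : A ≡ I_n mod J^i}. Then [K^i, K^j] ⊆ K^{i+j} for all i, j ≥ 1; in particular K^1 ⊇ K^2 ⊇ ... is a central filtration. -/
open Matrix

/-- The congruence subgroup of `GL n R` of level `I`: invertible matrices congruent to the
identity modulo the ideal `I` (every entry of `A - 1` lies in `I`). -/
def congruenceSubgroup (R : Type) [CommRing R] (n : ℕ) (I : Ideal R) :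
    Subgroup (GL (Fin n) R) :=
  Subgroup.copy
    (MonoidHom.ker (Units.map ((Ideal.Quotient.mk I).mapMatrix.toMonoidHom)))
    {A | ∀ k l, (A : Matrix (Fin n) (Fin n) R) k l - (1 : Matrix (Fin n) (Fin n) R) k l ∈ I}
    (by
      ext A
      simp only [Set.mem_setOf_eq, SetLike.mem_coe, MonoidHom.mem_ker, Units.ext_iff,
        Units.coe_map, RingHom.toMonoidHom_eq_coe, MonoidHom.coe_coe, Units.val_one]
      rw [← Matrix.ext_iff]
      refine forall₂_congr fun k l => ?_
      rw [RingHom.mapMatrix_apply, Matrix.map_apply,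
        show (1 : Matrix (Fin n) (Fin n) (R ⧸ I)) k l
            = Ideal.Quotient.mk I ((1 : Matrix (Fin n) (Fin n) R) k l) from by
          by_cases h : k = l <;> simp [Matrix.one_apply, h],
        Ideal.Quotient.mk_eq_mk_iff_sub_mem])

/-- For a commutative ring `R`, an ideal `J` and `K^i = {A ∈ GL_n(R) : A ≡ 1 mod J^i}`,
we have `[K^i, K^j] ⊆ K^{i+j}` for all `i, j ≥ 1`; in particular the `K^i` form a
descending central filtration `K^1 ⊇ K^2 ⊇ ⋯`. -/
theorem congruence_filtration_central (R : Type) [CommRing R] (n : ℕ) (J : Ideal R) :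
    (∀ i j : ℕ, 1 ≤ i → 1 ≤ j →
      ⁅congruenceSubgroup R n (J ^ i), congruenceSubgroup R n (J ^ j)⁆ ≤
        congruenceSubgroup R n (J ^ (i + j))) ∧
    (∀ i : ℕ, 1 ≤ i → congruenceSubgroup R n (J ^ (i + 1)) ≤ congruenceSubgroup R n (J ^ i)) := by
  have mem_cs : ∀ (I : Ideal R) (A : GL (Fin n) R),
      A ∈ congruenceSubgroup R n I ↔
        ∀ k l, (A : Matrix (Fin n) (Fin n) R) k l - (1 : Matrix (Fin n) (Fin n) R) k l ∈ I :=
    fun _ _ => Iff.rfl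
  constructor
  · intro i j hi hj
    rw [Subgroup.commutator_le]
    intro A hA B hB
    rw [mem_cs] at hA hB ⊢
    set a : Matrix (Fin n) (Fin n) R := (A : Matrix (Fin n) (Fin n) R) with ha
    set b : Matrix (Fin n) (Fin n) R := (B : Matrix (Fin n) (Fin n) R) with hb
    set a' : Matrix (Fin n) (Fin n) R := ((A⁻¹ : GL (Fin n) R) : Matrix (Fin n) (Fin n) R)
    set b' : Matrix (Fin n) (Fin n) R := ((B⁻¹ : GL (Fin n) R) : Matrix (Fin n) (Fin n) R)
    have haa' : a * a' = 1 := by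
      exact congrArg Units.val (mul_inv_cancel A)
    have hbb' : b * b' = 1 := by
      exact congrArg Units.val (mul_inv_cancel B)
    open scoped commutatorElement in
    have hcoe : ((⁅A, B⁆ : GL (Fin n) R) : Matrix (Fin n) (Fin n) R)
        = a * b * a' * b' := by
      rw [commutatorElement_def]; rfl
    open scoped commutatorElement in
    have key : ((⁅A, B⁆ : GL (Fin n) R) : Matrix (Fin n) (Fin n) R) - 1
        = (a * b - b * a) * (a' * b') := by
      rw [hcoe, sub_mul]
      have h1 : b * a * (a' * b') = 1 := by
        rw [mul_assoc b a, ← mul_assoc a a', haa', one_mul, hbb']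
      rw [h1, mul_assoc (a * b)]
    have hab : ∀ k l, (a * b - b * a) k l ∈ J ^ (i + j) := by
      intro k l
      have h2 : a * b - b * a = (a - 1) * (b - 1) - (b - 1) * (a - 1) := by
        noncomm_ring
      rw [h2, Matrix.sub_apply, Matrix.mul_apply, Matrix.mul_apply]
      refine Ideal.sub_mem _ (Ideal.sum_mem _ fun m _ => ?_) (Ideal.sum_mem _ fun m _ => ?_)
      · rw [pow_add]
        exact Ideal.mul_mem_mul (by simpa using hA k m) (by simpa using hB m l)
      · rw [add_comm i j, pow_add]
        exact Ideal.mul_mem_mul (by simpa using hB k m) (by simpa using hA m l)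
    intro k l
    open scoped commutatorElement in
    have : ((⁅A, B⁆ : GL (Fin n) R) : Matrix (Fin n) (Fin n) R) k l
        - (1 : Matrix (Fin n) (Fin n) R) k l
        = ((a * b - b * a) * (a' * b')) k l := by
      rw [← Matrix.sub_apply, key]
    rw [this, Matrix.mul_apply]
    exact Ideal.sum_mem _ fun m _ => Ideal.mul_mem_right _ _ (hab k m)
  · intro i hi A hA k l
    exact Ideal.pow_le_pow_right (Nat.le_succ i) (hA k l)
end

section
/- Let R be a commutative ring, J an ideal, and K^i = {A ∈ GL_n(R) : A ≡ I_n mod J^i}. Then the i-th term Γ^iK^1 of the lower central series of K^1 is contained in K^i. -/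
open Matrix
open scoped commutatorElement

lemma mem_congruenceSubgroup_iff {R : Type} [CommRing R] {n : ℕ} {I : Ideal R}
    {A : GL (Fin n) R} :
    A ∈ congruenceSubgroup R n I ↔
      ∀ k l, (A : Matrix (Fin n) (Fin n) R) k l - (1 : Matrix (Fin n) (Fin n) R) k l ∈ I := by
  rw [congruenceSubgroup, ← SetLike.mem_coe, Subgroup.coe_copy]
  rfl

lemma entries_mul_mem_left {R : Type} [CommRing R] {n : ℕ} {I : Ideal R}
    {M : Matrix (Fin n) (Fin n) R} (hM : ∀ k l, M k l ∈ I)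
    (N : Matrix (Fin n) (Fin n) R) : ∀ k l, (M * N) k l ∈ I := by
  intro k l
  rw [Matrix.mul_apply]
  exact Ideal.sum_mem _ fun j _ => Ideal.mul_mem_right _ _ (hM k j)

lemma entries_mul_mem_mul {R : Type} [CommRing R] {n : ℕ} {I J : Ideal R}
    {M N : Matrix (Fin n) (Fin n) R} (hM : ∀ k l, M k l ∈ I) (hN : ∀ k l, N k l ∈ J) :
    ∀ k l, (M * N) k l ∈ I * J := by
  intro k l
  rw [Matrix.mul_apply]
  exact Ideal.sum_mem _ fun j _ => Ideal.mul_mem_mul (hM k j) (hN j l)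

lemma commutator_mem_congruenceSubgroup {R : Type} [CommRing R] {n : ℕ} {I J : Ideal R}
    {A B : GL (Fin n) R} (hA : A ∈ congruenceSubgroup R n I)
    (hB : B ∈ congruenceSubgroup R n J) : ⁅A, B⁆ ∈ congruenceSubgroup R n (I * J) := by
  rw [mem_congruenceSubgroup_iff] at hA hB ⊢
  set a : Matrix (Fin n) (Fin n) R := ↑A with ha
  set b : Matrix (Fin n) (Fin n) R := ↑B with hb
  set ai : Matrix (Fin n) (Fin n) R := ↑(A⁻¹) with hai
  set bi : Matrix (Fin n) (Fin n) R := ↑(B⁻¹) with hbi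
  have haai : a * ai = 1 := by rw [ha, hai, ← Units.val_mul, mul_inv_cancel, Units.val_one]
  have hbbi : b * bi = 1 := by rw [hb, hbi, ← Units.val_mul, mul_inv_cancel, Units.val_one]
  have hc : ((⁅A, B⁆ : GL (Fin n) R) : Matrix (Fin n) (Fin n) R) = a * b * ai * bi := by
    rw [commutatorElement_def, Units.val_mul, Units.val_mul, Units.val_mul, ha, hb, hai, hbi]
  have hX : ∀ k l, (a - 1) k l ∈ I := by
    intro k l; simpa using hA k l
  have hY : ∀ k l, (b - 1) k l ∈ J := by
    intro k l; simpa using hB k l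
  have key : a * b * ai * bi - 1 = ((a - 1) * (b - 1) - (b - 1) * (a - 1)) * (ai * bi) := by
    have h1 : (a - 1) * (b - 1) - (b - 1) * (a - 1) = a * b - b * a := by noncomm_ring
    have hBA : b * a * (ai * bi) = 1 := by
      rw [mul_assoc b a, ← mul_assoc a ai, haai, one_mul, hbbi]
    rw [h1, sub_mul, hBA, mul_assoc (a * b)]
  intro k l
  have hXY : ∀ k l, ((a - 1) * (b - 1) - (b - 1) * (a - 1)) k l ∈ I * J := by
    intro k l
    have := Ideal.sub_mem _ (entries_mul_mem_mul hX hY k l)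
      ((Ideal.mul_comm I J) ▸ entries_mul_mem_mul hY hX k l)
    simpa using this
  have h2 := entries_mul_mem_left hXY (ai * bi) k l
  rw [← key, ← hc] at h2
  simpa using h2

lemma lcs_le_congruenceSubgroup (R : Type) [CommRing R] (n : ℕ) (J : Ideal R) (m : ℕ) :
    Subgroup.map (congruenceSubgroup R n (J ^ 1)).subtype
        (Subgroup.lowerCentralSeries (⊤ : Subgroup ↥(congruenceSubgroup R n (J ^ 1))) m) ≤
      congruenceSubgroup R n (J ^ (m + 1)) := by
  induction m with
  | zero =>
      rintro g ⟨y, -, rfl⟩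
      simpa using y.2
  | succ m ih =>
      rw [Subgroup.lowerCentralSeries_succ]
      rw [Subgroup.map_commutator]
      rw [Subgroup.commutator_le]
      intro g hg h hh
      have hg' : g ∈ congruenceSubgroup R n (J ^ (m + 1)) := ih hg
      have hh' : h ∈ congruenceSubgroup R n (J ^ 1) := by
        rcases hh with ⟨x, -, rfl⟩
        exact x.2
      have := commutator_mem_congruenceSubgroup hg' hh'
      rwa [← pow_add] at this

/-- For a commutative ring `R`, an ideal `J`, and the congruence subgroups
`K^i = {A ∈ GL_n(R) : A ≡ 1 mod J^i}`, the `i`-th term `Γ^i K^1` of the lower central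
series of `K^1` is contained in `K^i` (here `Γ^i = lowerCentralSeries _ (i-1)`). -/
theorem lowerCentralSeries_le_congruenceSubgroup (R : Type) [CommRing R] (n : ℕ)
    (J : Ideal R) (i : ℕ) (hi : 1 ≤ i) :
    Subgroup.map (congruenceSubgroup R n (J ^ 1)).subtype
        (Subgroup.lowerCentralSeries (⊤ : Subgroup ↥(congruenceSubgroup R n (J ^ 1))) (i - 1)) ≤
      congruenceSubgroup R n (J ^ i) := by
  have := lcs_le_congruenceSubgroup R n J (i - 1)
  rwa [Nat.sub_add_cancel hi] at this
end

section
/- In the Laurent polynomial ring R = ℤ[t₁^{±1},…,t_n^{±1}] with augmentation ideal J = ker(R → ℤ, t_i ↦ 1), for i > 1 and any matrix A ∈ GL_n(R) with A ≡ I_n mod J^i, the first-order term A_{(i)} ∈ M_n(J^i/J^{i+1}) has trace zero. -/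
/-- The Laurent polynomial ring `ℤ[t₁^{±1},…,t_n^{±1}]`, realized as the group ring
`ℤ[ℤⁿ]`. -/
abbrev LaurentMv (n : ℕ) : Type := AddMonoidAlgebra ℤ (Fin n →₀ ℤ)

/-- The variable `t_i` in `ℤ[t₁^{±1},…,t_n^{±1}]`. -/
noncomputable def tvar {n : ℕ} (i : Fin n) : LaurentMv n :=
  AddMonoidAlgebra.single (Finsupp.single i 1) 1

/-- The augmentation map `ℤ[t₁^{±1},…,t_n^{±1}] → ℤ`, `t_i ↦ 1`. -/
noncomputable def aug (n : ℕ) : LaurentMv n →+* ℤ :=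
  AddMonoidAlgebra.liftNCRingHom (RingHom.id ℤ) 1 (fun _ _ => Commute.one_right _)

/-- The augmentation ideal `J = ker(aug)` of `ℤ[t₁^{±1},…,t_n^{±1}]`. -/
noncomputable def augIdeal (n : ℕ) : Ideal (LaurentMv n) := RingHom.ker (aug n)

lemma tvar_sub_one_mem {n : ℕ} (i : Fin n) : tvar i - 1 ∈ augIdeal n := by
  have h1 : aug n (tvar i) = 1 := by
    simp [aug, tvar, AddMonoidAlgebra.liftNCRingHom, AddMonoidAlgebra.liftNC_single]
  simp [augIdeal, RingHom.mem_ker, map_sub, h1]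

open Matrix

section DetLemma
variable {S : Type*} [CommRing S]

lemma prod_one_add_mem (I : Ideal S) {ι : Type*} [DecidableEq ι] (s : Finset ι) (b : ι → S)
    (hb : ∀ k ∈ s, b k ∈ I) :
    (∏ k ∈ s, (1 + b k)) - 1 - ∑ k ∈ s, b k ∈ I * I := by
  classical
  induction s using Finset.induction_on with
  | empty => simp
  | @insert a s ha ih =>
    have hbk : b a ∈ I := hb a (Finset.mem_insert_self a s)
    have ih' := ih (fun k hk => hb k (Finset.mem_insert_of_mem hk))
    have hSum : ∑ k ∈ s, b k ∈ I := Ideal.sum_mem I (fun k hk => hb k (Finset.mem_insert_of_mem hk))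
    have hP1 : (∏ k ∈ s, (1 + b k)) - 1 ∈ I := by
      have : (∏ k ∈ s, (1 + b k)) - 1
          = ((∏ k ∈ s, (1 + b k)) - 1 - ∑ k ∈ s, b k) + ∑ k ∈ s, b k := by ring
      rw [this]
      exact add_mem ((Ideal.mul_le_left : I*I ≤ I) ih') hSum
    rw [Finset.prod_insert ha, Finset.sum_insert ha]
    have key : (1 + b a) * ∏ k ∈ s, (1 + b k) - 1 - (b a + ∑ k ∈ s, b k)
        = ((∏ k ∈ s, (1 + b k)) - 1 - ∑ k ∈ s, b k) + b a * ((∏ k ∈ s, (1 + b k)) - 1) := by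
      ring
    rw [key]
    exact add_mem ih' (Ideal.mul_mem_mul hbk hP1)

open Matrix in
lemma det_sub_one_sub_trace_mem {m : Type*} [DecidableEq m] [Fintype m] (I : Ideal S)
    (M : Matrix m m S) (h : ∀ k l, M k l - (1 : Matrix m m S) k l ∈ I) :
    M.det - 1 - ∑ k, (M k k - (1 : Matrix m m S) k k) ∈ I * I := by
  classical
  have hdet : M.det = (∏ k, M k k)
      + ∑ σ ∈ Finset.univ.erase (1 : Equiv.Perm m), Equiv.Perm.sign σ • ∏ k, M (σ k) k := by
    rw [Matrix.det_apply, ← Finset.add_sum_erase _ _ (Finset.mem_univ (1 : Equiv.Perm m))]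
    simp
  have h1 : (∏ k, M k k) - 1 - ∑ k, (M k k - (1 : Matrix m m S) k k) ∈ I * I := by
    have hb : ∀ k ∈ Finset.univ, M k k - (1 : Matrix m m S) k k ∈ I := fun k _ => h k k
    have := prod_one_add_mem I Finset.univ (fun k => M k k - (1 : Matrix m m S) k k) hb
    have heq : ∀ k, 1 + (M k k - (1 : Matrix m m S) k k) = M k k := by
      intro k; rw [Matrix.one_apply_eq]; ring
    simpa only [heq] using this
  have h2 : ∑ σ ∈ Finset.univ.erase (1 : Equiv.Perm m), Equiv.Perm.sign σ • ∏ k, M (σ k) k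
      ∈ I * I := by
    refine Ideal.sum_mem _ (fun σ hσ => ?_)
    have hσ1 : σ ≠ 1 := (Finset.mem_erase.mp hσ).1
    have : ¬ ∀ k, σ k = k := fun hc => hσ1 (Equiv.ext hc)
    push_neg at this
    obtain ⟨k₀, hk₀⟩ := this
    set k₁ := σ k₀ with hk₁def
    have hk₁ne : σ k₁ ≠ k₁ := fun hc => hk₀ (σ.injective hc)
    have hk₁k₀ : k₁ ≠ k₀ := hk₀
    have e0 : M (σ k₀) k₀ ∈ I := by
      have := h (σ k₀) k₀; rwa [Matrix.one_apply_ne hk₀, sub_zero] at this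
    have e1 : M (σ k₁) k₁ ∈ I := by
      have := h (σ k₁) k₁; rwa [Matrix.one_apply_ne hk₁ne, sub_zero] at this
    have hprod : ∏ k, M (σ k) k
        = M (σ k₀) k₀ * (M (σ k₁) k₁ * ∏ k ∈ (Finset.univ.erase k₀).erase k₁, M (σ k) k) := by
      rw [← Finset.mul_prod_erase Finset.univ (fun k => M (σ k) k) (Finset.mem_univ k₀),
        ← Finset.mul_prod_erase (Finset.univ.erase k₀) (fun k => M (σ k) k)
          (Finset.mem_erase.mpr ⟨hk₁k₀, Finset.mem_univ k₁⟩)]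
    have hmem : ∏ k, M (σ k) k ∈ I * I := by
      rw [hprod]
      exact Ideal.mul_mem_mul e0 (Ideal.mul_mem_right _ _ e1)
    have : Equiv.Perm.sign σ • ∏ k, M (σ k) k
        = ((Equiv.Perm.sign σ : ℤ) : S) * ∏ k, M (σ k) k := by
      rw [Units.smul_def, zsmul_eq_mul]
    rw [this]
    exact Ideal.mul_mem_left _ _ hmem
  have key : M.det - 1 - ∑ k, (M k k - (1 : Matrix m m S) k k)
      = ((∏ k, M k k) - 1 - ∑ k, (M k k - (1 : Matrix m m S) k k))
        + ∑ σ ∈ Finset.univ.erase (1 : Equiv.Perm m), Equiv.Perm.sign σ • ∏ k, M (σ k) k := by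
    rw [hdet]; ring
  rw [key]
  exact add_mem h1 h2

end DetLemma

lemma aug_single {n : ℕ} (a : Fin n →₀ ℤ) (r : ℤ) :
    aug n (AddMonoidAlgebra.single a r) = r := by
  simp [aug, AddMonoidAlgebra.liftNCRingHom, AddMonoidAlgebra.liftNC_single]

lemma exists_eq_single_of_isUnit {n : ℕ} {u : LaurentMv n} (hu : IsUnit u) :
    ∃ a : Fin n →₀ ℤ, u = AddMonoidAlgebra.single a (u.coeff a) := by
  obtain ⟨U, rfl⟩ := hu
  set u : LaurentMv n := (U : LaurentMv n) with hudef
  set v : LaurentMv n := ((U⁻¹ : (LaurentMv n)ˣ) : LaurentMv n) with hvdef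
  have huv : u * v = 1 := U.mul_inv
  have hu0 : u ≠ 0 := left_ne_zero_of_mul_eq_one huv
  have hv0 : v ≠ 0 := right_ne_zero_of_mul_eq_one huv
  obtain ⟨a, haS, hamax⟩ := Finset.exists_max_image u.coeff.support (toLex : _ → Lex (Fin n →₀ ℤ))
    (Finsupp.support_nonempty_iff.mpr (mt AddMonoidAlgebra.coeff_eq_zero.mp hu0))
  obtain ⟨a', ha'S, hamin⟩ := Finset.exists_min_image u.coeff.support (toLex : _ → Lex (Fin n →₀ ℤ))
    (Finsupp.support_nonempty_iff.mpr (mt AddMonoidAlgebra.coeff_eq_zero.mp hu0))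
  obtain ⟨b, hbS, hbmax⟩ := Finset.exists_max_image v.coeff.support (toLex : _ → Lex (Fin n →₀ ℤ))
    (Finsupp.support_nonempty_iff.mpr (mt AddMonoidAlgebra.coeff_eq_zero.mp hv0))
  obtain ⟨b', hb'S, hbmin⟩ := Finset.exists_min_image v.coeff.support (toLex : _ → Lex (Fin n →₀ ℤ))
    (Finsupp.support_nonempty_iff.mpr (mt AddMonoidAlgebra.coeff_eq_zero.mp hv0))
  -- the two UniqueAdd statements
  have hUAmax : UniqueAdd u.coeff.support v.coeff.support a b := by
    intro x y hx hy hxy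
    have hxa : toLex x ≤ toLex a := hamax x hx
    have hyb : toLex y ≤ toLex b := hbmax y hy
    have hsum : toLex x + toLex y = toLex a + toLex b := congrArg toLex hxy
    have hxa' : toLex x = toLex a := by
      by_contra hne
      exact absurd hsum
        (add_lt_add_of_lt_of_le (lt_of_le_of_ne hxa hne) hyb).ne
    refine ⟨toLex.injective hxa', toLex.injective ?_⟩
    rw [hxa'] at hsum
    exact add_left_cancel hsum
  have hUAmin : UniqueAdd u.coeff.support v.coeff.support a' b' := by
    intro x y hx hy hxy
    have hxa : toLex a' ≤ toLex x := hamin x hx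
    have hyb : toLex b' ≤ toLex y := hbmin y hy
    have hsum : toLex x + toLex y = toLex a' + toLex b' := congrArg toLex hxy
    have hxa' : toLex x = toLex a' := by
      by_contra hne
      exact absurd hsum.symm
        (add_lt_add_of_lt_of_le (lt_of_le_of_ne hxa (Ne.symm hne)) hyb).ne
    refine ⟨toLex.injective hxa', toLex.injective ?_⟩
    rw [hxa'] at hsum
    exact add_left_cancel hsum
  -- coefficients at extreme monomials
  have hcoefmax : (u * v).coeff (a + b) = u.coeff a * v.coeff b :=
    AddMonoidAlgebra.coeff_mul_add_of_uniqueAdd hUAmax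
  have hcoefmin : (u * v).coeff (a' + b') = u.coeff a' * v.coeff b' :=
    AddMonoidAlgebra.coeff_mul_add_of_uniqueAdd hUAmin
  have hone : ∀ c : Fin n →₀ ℤ, (1 : LaurentMv n).coeff c = if c = 0 then 1 else 0 := by
    intro c
    rw [AddMonoidAlgebra.one_def]
    simp [AddMonoidAlgebra.coeff_single, Finsupp.single_apply, eq_comm]
  have habz : a + b = 0 := by
    by_contra hab
    rw [huv, hone, if_neg hab] at hcoefmax
    exact mul_ne_zero (Finsupp.mem_support_iff.mp haS) (Finsupp.mem_support_iff.mp hbS)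
      hcoefmax.symm
  have habz' : a' + b' = 0 := by
    by_contra hab
    rw [huv, hone, if_neg hab] at hcoefmin
    exact mul_ne_zero (Finsupp.mem_support_iff.mp ha'S) (Finsupp.mem_support_iff.mp hb'S)
      hcoefmin.symm
  -- a = a'
  have hsq : toLex a + toLex b = toLex a' + toLex b' := by
    have h1 : toLex (a + b) = toLex ((0 : Fin n →₀ ℤ)) := congrArg toLex habz
    have h2 : toLex (a' + b') = toLex ((0 : Fin n →₀ ℤ)) := congrArg toLex habz'
    exact (h1.trans h2.symm : _)
  have haa' : toLex a ≤ toLex a' := by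
    have h1 : toLex a + toLex b ≤ toLex a' + toLex b := by
      rw [hsq]
      exact add_le_add_right (hbmin b hbS) _
    exact le_of_add_le_add_right h1
  use a
  apply AddMonoidAlgebra.coeff_injective
  rw [AddMonoidAlgebra.coeff_single, Finsupp.eq_single_iff]
  refine ⟨fun x hx => ?_, rfl⟩
  have h1 : toLex x ≤ toLex a := hamax x hx
  have h2 : toLex a ≤ toLex x := le_trans haa' (hamin x hx)
  simp only [Finset.mem_singleton]
  exact toLex.injective (le_antisymm h1 h2)

open DualNumber TrivSqZeroExt in
/-- The ring hom `ℤ[ℤⁿ] → ℤ[ε]` sending `t^a ↦ 1 + a_j ε`. -/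
noncomputable def dualEval {n : ℕ} (j : Fin n) : LaurentMv n →+* DualNumber ℤ :=
  AddMonoidAlgebra.liftNCRingHom (Int.castRingHom (DualNumber ℤ))
    { toFun := fun a => 1 + ((Multiplicative.toAdd a) j : DualNumber ℤ) * eps
      map_one' := by simp
      map_mul' := by
        intro x y
        have h : ∀ r s : ℤ, (1 + (r : DualNumber ℤ) * eps) * (1 + (s : DualNumber ℤ) * eps)
            = 1 + ((r + s : ℤ) : DualNumber ℤ) * eps := by
          intro r s
          have : ((r : DualNumber ℤ) * eps) * ((s : DualNumber ℤ) * eps) = 0 := by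
            rw [mul_comm (s : DualNumber ℤ) eps, ← mul_assoc, mul_assoc (r : DualNumber ℤ),
              eps_mul_eps]
            simp
          push_cast
          rw [add_mul, mul_add, mul_add, one_mul, mul_one, this, add_zero, add_mul]
          ring
        show 1 + ((Multiplicative.toAdd (x * y)) j : DualNumber ℤ) * eps
            = (1 + ((Multiplicative.toAdd x) j : DualNumber ℤ) * eps)
              * (1 + ((Multiplicative.toAdd y) j : DualNumber ℤ) * eps)
        have hxy : (Multiplicative.toAdd (x * y)) j
            = (Multiplicative.toAdd x) j + (Multiplicative.toAdd y) j := rfl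
        rw [hxy, ← h] }
    (fun _ _ => Commute.all _ _)

open DualNumber TrivSqZeroExt in
lemma dualEval_single {n : ℕ} (j : Fin n) (a : Fin n →₀ ℤ) (r : ℤ) :
    dualEval j (AddMonoidAlgebra.single a r)
      = (r : DualNumber ℤ) * (1 + (a j : DualNumber ℤ) * eps) := by
  simp [dualEval, AddMonoidAlgebra.liftNCRingHom, AddMonoidAlgebra.liftNC_single]

open DualNumber TrivSqZeroExt in
lemma fst_dualEval {n : ℕ} (j : Fin n) (x : LaurentMv n) :
    fst (dualEval j x) = aug n x := by
  have : ((fstHom ℤ ℤ ℤ).toRingHom).comp (dualEval j) = aug n := by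
    refine AddMonoidAlgebra.ringHom_ext (fun b => ?_) (fun a => ?_) <;>
      simp [dualEval_single, aug_single]
  exact DFunLike.congr_fun this x

open DualNumber TrivSqZeroExt in
lemma dualEval_sq_zero {n : ℕ} (j : Fin n) {x : LaurentMv n}
    (hx : x ∈ augIdeal n ^ 2) : dualEval j x = 0 := by
  rw [pow_two] at hx
  refine Submodule.mul_induction_on hx (fun p hp q hq => ?_) (fun p q hp hq => by
    rw [_root_.map_add, hp, hq, add_zero])
  rw [_root_.map_mul]
  have hp0 : fst (dualEval j p) = 0 := by
    rw [fst_dualEval]; exact RingHom.mem_ker.mp hp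
  have hq0 : fst (dualEval j q) = 0 := by
    rw [fst_dualEval]; exact RingHom.mem_ker.mp hq
  ext
  · rw [fst_mul, hp0, zero_mul, fst_zero]
  · rw [DualNumber.snd_mul, hp0, hq0]
    simp

open DualNumber TrivSqZeroExt in
lemma eq_zero_of_single_sub_one_mem {n : ℕ} {a : Fin n →₀ ℤ}
    (h : AddMonoidAlgebra.single a (1 : ℤ) - 1 ∈ augIdeal n ^ 2) : a = 0 := by
  ext j
  have h0 := dualEval_sq_zero j h
  rw [_root_.map_sub, _root_.map_one, dualEval_single] at h0
  have : ((a j : DualNumber ℤ) * eps) = 0 := by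
    rw [Int.cast_one, one_mul] at h0
    calc (a j : DualNumber ℤ) * eps = (1 + (a j : DualNumber ℤ) * eps) - 1 := by ring
    _ = 0 := h0
  have hsnd := congrArg snd this
  rw [DualNumber.snd_mul] at hsnd
  rw [Finsupp.zero_apply]
  simpa using hsnd


/-- In `R = ℤ[t₁^{±1},…,t_n^{±1}]` with augmentation ideal `J`, for `i > 1` and any
`A ∈ GL_n(R)` with `A ≡ 1 mod J^i`, the leading term `A_{(i)} ∈ M_n(J^i/J^{i+1})` has
trace zero. -/
theorem gassner_leading_term_trace_zero (n i : ℕ) (hi : 1 < i)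
    (A : GL (Fin n) (LaurentMv n))
    (hA : ∀ k l, (A : Matrix (Fin n) (Fin n) (LaurentMv n)) k l
        - (1 : Matrix (Fin n) (Fin n) (LaurentMv n)) k l ∈ augIdeal n ^ i) :
    ∑ k : Fin n,
      (Submodule.Quotient.mk
        (⟨(A : Matrix (Fin n) (Fin n) (LaurentMv n)) k k
            - (1 : Matrix (Fin n) (Fin n) (LaurentMv n)) k k, hA k k⟩ : ↥(augIdeal n ^ i)) :
        ↥(augIdeal n ^ i) ⧸
          Submodule.comap (augIdeal n ^ i).subtype (augIdeal n ^ (i + 1))) = 0 := by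
  classical
  have hC : (A : Matrix (Fin n) (Fin n) (LaurentMv n)).det - 1
      - ∑ k, ((A : Matrix (Fin n) (Fin n) (LaurentMv n)) k k
          - (1 : Matrix (Fin n) (Fin n) (LaurentMv n)) k k)
      ∈ (augIdeal n ^ i) * (augIdeal n ^ i) :=
    det_sub_one_sub_trace_mem (augIdeal n ^ i) _ hA
  have hTmem : (∑ k, ((A : Matrix (Fin n) (Fin n) (LaurentMv n)) k k
      - (1 : Matrix (Fin n) (Fin n) (LaurentMv n)) k k)) ∈ augIdeal n ^ i :=
    Ideal.sum_mem _ (fun k _ => hA k k)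
  have hJiJi : (augIdeal n ^ i) * (augIdeal n ^ i) ≤ augIdeal n ^ (i + 1) := by
    rw [← pow_add]
    exact Ideal.pow_le_pow_right (by omega)
  have hJi_le2 : augIdeal n ^ i ≤ augIdeal n ^ 2 := Ideal.pow_le_pow_right (by omega)
  have hdu : IsUnit (A : Matrix (Fin n) (Fin n) (LaurentMv n)).det :=
    (Matrix.isUnit_iff_isUnit_det _).mp A.isUnit
  -- the augmentation of the determinant is 1
  have haug : aug n (A : Matrix (Fin n) (Fin n) (LaurentMv n)).det = 1 := by
    have hmap : (A : Matrix (Fin n) (Fin n) (LaurentMv n)).map (aug n) = 1 := by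
      ext k l
      rw [Matrix.map_apply]
      have h1 : aug n ((A : Matrix (Fin n) (Fin n) (LaurentMv n)) k l)
          = aug n ((1 : Matrix (Fin n) (Fin n) (LaurentMv n)) k l) := by
        have h2 : (A : Matrix (Fin n) (Fin n) (LaurentMv n)) k l
            - (1 : Matrix (Fin n) (Fin n) (LaurentMv n)) k l ∈ augIdeal n :=
          Ideal.pow_le_self (by omega) (hA k l)
        have h3 := RingHom.mem_ker.mp h2
        rw [_root_.map_sub, sub_eq_zero] at h3
        exact h3
      rw [h1]
      by_cases hkl : k = l <;>
        simp [Matrix.one_apply, hkl]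
    rw [RingHom.map_det, RingHom.mapMatrix_apply, hmap, Matrix.det_one]
  -- det A - 1 lies in J^2
  have hdet1mem : (A : Matrix (Fin n) (Fin n) (LaurentMv n)).det - 1 ∈ augIdeal n ^ 2 := by
    refine hJi_le2 ?_
    have heq : (A : Matrix (Fin n) (Fin n) (LaurentMv n)).det - 1
        = ((A : Matrix (Fin n) (Fin n) (LaurentMv n)).det - 1
            - ∑ k, ((A : Matrix (Fin n) (Fin n) (LaurentMv n)) k k
                - (1 : Matrix (Fin n) (Fin n) (LaurentMv n)) k k))
          + ∑ k, ((A : Matrix (Fin n) (Fin n) (LaurentMv n)) k k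
              - (1 : Matrix (Fin n) (Fin n) (LaurentMv n)) k k) := by ring
    rw [heq]
    exact add_mem ((Ideal.mul_le_left : _ * _ ≤ augIdeal n ^ i) hC) hTmem
  -- the determinant is a trivial unit, hence 1
  obtain ⟨a, ha⟩ := exists_eq_single_of_isUnit hdu
  have hconst : (A : Matrix (Fin n) (Fin n) (LaurentMv n)).det.coeff a = 1 := by
    have := congrArg (aug n) ha
    rw [haug, aug_single] at this
    exact this.symm
  rw [hconst] at ha
  have ha0 : a = 0 :=
    eq_zero_of_single_sub_one_mem (by rw [← ha]; exact hdet1mem)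
  have hdet1 : (A : Matrix (Fin n) (Fin n) (LaurentMv n)).det = 1 := by
    rw [ha, ha0, ← AddMonoidAlgebra.one_def]
  -- the trace lies in J^(i+1)
  have hTfinal : (∑ k, ((A : Matrix (Fin n) (Fin n) (LaurentMv n)) k k
      - (1 : Matrix (Fin n) (Fin n) (LaurentMv n)) k k)) ∈ augIdeal n ^ (i + 1) := by
    have heq : (∑ k, ((A : Matrix (Fin n) (Fin n) (LaurentMv n)) k k
        - (1 : Matrix (Fin n) (Fin n) (LaurentMv n)) k k))
        = -((A : Matrix (Fin n) (Fin n) (LaurentMv n)).det - 1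
            - ∑ k, ((A : Matrix (Fin n) (Fin n) (LaurentMv n)) k k
                - (1 : Matrix (Fin n) (Fin n) (LaurentMv n)) k k))
          + ((A : Matrix (Fin n) (Fin n) (LaurentMv n)).det - 1) := by ring
    rw [heq]
    refine add_mem (neg_mem (hJiJi hC)) ?_
    rw [hdet1, sub_self]
    exact zero_mem _
  -- conclude
  simp only [← Submodule.mkQ_apply]
  rw [← map_sum, Submodule.mkQ_apply, Submodule.Quotient.mk_eq_zero, Submodule.mem_comap]
  simpa using hTfinal
end

section
/- Let F be the free group on x₁,…,x_m with m ≥ 2. The classes of the commutators [x_r, x_s] with r > s form a basis of the free abelian group Γ²F/Γ³F; in particular Γ²F/Γ³F is free abelian of rank m(m-1)/2. -/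
section

variable (m : ℕ)

open scoped commutatorElement

/-- `Γ² F / Γ³ F` for the free group `F` on `m` generators. -/
abbrev Gamma2ModGamma3 :=
  ↥((⊤ : Subgroup (FreeGroup (Fin m))).lowerCentralSeries 1) ⧸
    ((⊤ : Subgroup (FreeGroup (Fin m))).lowerCentralSeries 2).subgroupOf
      ((⊤ : Subgroup (FreeGroup (Fin m))).lowerCentralSeries 1)

lemma commutator_gamma2_le_gamma3 :
    ⁅(⊤ : Subgroup (FreeGroup (Fin m))).lowerCentralSeries 1, (⊤ : Subgroup (FreeGroup (Fin m))).lowerCentralSeries 1⁆ ≤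
      (⊤ : Subgroup (FreeGroup (Fin m))).lowerCentralSeries 2 := by
  rw [Subgroup.lowerCentralSeries_succ]
  exact Subgroup.commutator_mono le_rfl le_top

noncomputable instance : CommGroup (Gamma2ModGamma3 m) :=
  { (inferInstance : Group (Gamma2ModGamma3 m)) with
    mul_comm := by
      intro a b
      induction a using QuotientGroup.induction_on with
      | H x =>
      induction b using QuotientGroup.induction_on with
      | H y =>
      rw [← QuotientGroup.mk_mul, ← QuotientGroup.mk_mul, QuotientGroup.eq]
      rw [Subgroup.mem_subgroupOf]
      have h : (((x : FreeGroup (Fin m)) * (y : FreeGroup (Fin m)))⁻¹ *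
            ((y : FreeGroup (Fin m)) * (x : FreeGroup (Fin m))))
          = ⁅((y : FreeGroup (Fin m)))⁻¹, ((x : FreeGroup (Fin m)))⁻¹⁆ := by
        group
      show (((x : FreeGroup (Fin m)) * (y : FreeGroup (Fin m)))⁻¹ *
          ((y : FreeGroup (Fin m)) * (x : FreeGroup (Fin m)))) ∈ _
      rw [h]
      exact commutator_gamma2_le_gamma3 m
        (Subgroup.commutator_mem_commutator (inv_mem y.2) (inv_mem x.2)) }

lemma of_commutator_mem_gamma2 (r s : Fin m) :
    ⁅FreeGroup.of r, FreeGroup.of s⁆ ∈ (⊤ : Subgroup (FreeGroup (Fin m))).lowerCentralSeries 1 := by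
  rw [Subgroup.lowerCentralSeries_succ]
  exact Subgroup.commutator_mem_commutator (by simp [Subgroup.lowerCentralSeries_zero])
    (Subgroup.mem_top _)


@[ext] structure Heis where
  a : ℤ
  b : ℤ
  c : ℤ

namespace Heis

instance : Mul Heis := ⟨fun x y => ⟨x.a + y.a, x.b + y.b, x.c + y.c + x.a * y.b⟩⟩
instance : One Heis := ⟨⟨0, 0, 0⟩⟩
instance : Inv Heis := ⟨fun x => ⟨-x.a, -x.b, -x.c + x.a * x.b⟩⟩

@[simp] lemma mul_a (x y : Heis) : (x * y).a = x.a + y.a := rfl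
@[simp] lemma mul_b (x y : Heis) : (x * y).b = x.b + y.b := rfl
@[simp] lemma mul_c (x y : Heis) : (x * y).c = x.c + y.c + x.a * y.b := rfl
@[simp] lemma one_a : (1 : Heis).a = 0 := rfl
@[simp] lemma one_b : (1 : Heis).b = 0 := rfl
@[simp] lemma one_c : (1 : Heis).c = 0 := rfl
@[simp] lemma inv_a (x : Heis) : (x⁻¹).a = -x.a := rfl
@[simp] lemma inv_b (x : Heis) : (x⁻¹).b = -x.b := rfl
@[simp] lemma inv_c (x : Heis) : (x⁻¹).c = -x.c + x.a * x.b := rfl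

instance : Group Heis where
  mul_assoc x y z := by ext <;> simp <;> ring
  one_mul x := by ext <;> simp
  mul_one x := by ext <;> simp
  inv_mul_cancel x := by ext <;> simp <;> ring

@[simp] lemma commutator_a (g h : Heis) : ⁅g, h⁆.a = 0 := by
  simp [commutatorElement_def]
@[simp] lemma commutator_b (g h : Heis) : ⁅g, h⁆.b = 0 := by
  simp [commutatorElement_def]
@[simp] lemma commutator_c (g h : Heis) : ⁅g, h⁆.c = g.a * h.b - h.a * g.b := by
  simp [commutatorElement_def]; ring

lemma central_of_ab_zero {x : Heis} (ha : x.a = 0) (hb : x.b = 0) (y : Heis) :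
    x * y = y * x := by ext <;> simp [ha, hb] <;> ring

lemma lcs_one_le : ∀ x ∈ (⊤ : Subgroup Heis).lowerCentralSeries 1, x.a = 0 ∧ x.b = 0 := by
  have : (⊤ : Subgroup Heis).lowerCentralSeries 1 ≤
      { carrier := {x : Heis | x.a = 0 ∧ x.b = 0}
        one_mem' := by simp
        mul_mem' := by rintro x y ⟨hx1, hx2⟩ ⟨hy1, hy2⟩; simp_all
        inv_mem' := by rintro x ⟨hx1, hx2⟩; simp_all } := by
    rw [Subgroup.lowerCentralSeries_succ]
    rw [Subgroup.commutator_def, Subgroup.closure_le]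
    rintro x ⟨p, -, q, -, rfl⟩
    have : p * q * p⁻¹ * q⁻¹ = ⁅p, q⁆ := rfl
    show ⁅p, q⁆ ∈ _
    exact ⟨commutator_a p q, commutator_b p q⟩
  exact fun x hx => this hx

lemma lcs_two_eq_bot : (⊤ : Subgroup Heis).lowerCentralSeries 2 = ⊥ := by
  rw [eq_bot_iff, Subgroup.lowerCentralSeries_succ, Subgroup.commutator_def,
    Subgroup.closure_le]
  rintro x ⟨p, hp, q, -, rfl⟩
  obtain ⟨ha, hb⟩ := lcs_one_le p hp
  have : p * q * p⁻¹ * q⁻¹ = ⁅p, q⁆ := rfl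
  show ⁅p, q⁆ ∈ _
  have h1 : (⁅p, q⁆ : Heis) = 1 := by
    rw [commutatorElement_eq_one_iff_mul_comm]
    exact central_of_ab_zero ha hb q
  simp [h1]

end Heis

section Part2
open FreeGroup

variable {m : ℕ}

noncomputable def phi (p : Fin m × Fin m) : FreeGroup (Fin m) →* Heis :=
  FreeGroup.lift (fun i => if i = p.1 then ⟨1, 0, 0⟩ else if i = p.2 then ⟨0, 1, 0⟩ else 1)

lemma phi_gamma1 (p : Fin m × Fin m) {x : FreeGroup (Fin m)}
    (hx : x ∈ (⊤ : Subgroup (FreeGroup (Fin m))).lowerCentralSeries 1) :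
    (phi p x).a = 0 ∧ (phi p x).b = 0 := by
  exact Heis.lcs_one_le _ (Subgroup.lowerCentralSeries.map (phi p) 1 ⟨x, hx, rfl⟩)

lemma phi_gamma2 (p : Fin m × Fin m) {x : FreeGroup (Fin m)}
    (hx : x ∈ (⊤ : Subgroup (FreeGroup (Fin m))).lowerCentralSeries 2) :
    phi p x = 1 := by
  have h := lowerCentralSeries.map (phi p) 2 ⟨x, hx, rfl⟩
  rw [Heis.lcs_two_eq_bot, Subgroup.mem_bot] at h
  exact h

noncomputable def psi (p : Fin m × Fin m) :
    ↥((⊤ : Subgroup (FreeGroup (Fin m))).lowerCentralSeries 1) →* Multiplicative ℤ where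
  toFun x := Multiplicative.ofAdd (phi p (x : FreeGroup (Fin m))).c
  map_one' := by simp
  map_mul' x y := by
    have ha := (phi_gamma1 p x.2).1
    show Multiplicative.ofAdd (phi p ((x : FreeGroup (Fin m)) * (y : FreeGroup (Fin m)))).c =
      Multiplicative.ofAdd (phi p (x : FreeGroup (Fin m))).c *
        Multiplicative.ofAdd (phi p (y : FreeGroup (Fin m))).c
    rw [MonoidHom.map_mul, ← ofAdd_add]
    congr 1
    rw [Heis.mul_c, ha]
    ring

noncomputable def ell (p : Fin m × Fin m) : Gamma2ModGamma3 m →* Multiplicative ℤ :=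
  QuotientGroup.lift _ (psi p) (by
    intro x hx
    rw [Subgroup.mem_subgroupOf] at hx
    show Multiplicative.ofAdd (phi p (x : FreeGroup (Fin m))).c = 1
    rw [phi_gamma2 p hx]
    simp)

noncomputable def ellAdd (p : Fin m × Fin m) : Additive (Gamma2ModGamma3 m) →+ ℤ :=
  AddMonoidHom.mk' (fun q => Multiplicative.toAdd (ell p q.toMul))
    (by intro x y; simp [_root_.map_mul])

lemma ellAdd_apply (p : Fin m × Fin m)
    {x : FreeGroup (Fin m)} (hx : x ∈ (⊤ : Subgroup (FreeGroup (Fin m))).lowerCentralSeries 1) :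
    ellAdd p (Additive.ofMul (α := Gamma2ModGamma3 m) (QuotientGroup.mk ⟨x, hx⟩)) =
      (phi p x).c := rfl

lemma phi_of (p : Fin m × Fin m) (i : Fin m) :
    phi p (FreeGroup.of i) =
      if i = p.1 then ⟨1, 0, 0⟩ else if i = p.2 then ⟨0, 1, 0⟩ else 1 := by
  simp [phi]

lemma ellAdd_commutator (p q : {p : Fin m × Fin m // p.2 < p.1}) :
    ellAdd p.1 (Additive.ofMul (α := Gamma2ModGamma3 m)
      (QuotientGroup.mk ⟨⁅FreeGroup.of q.1.1, FreeGroup.of q.1.2⁆,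
        of_commutator_mem_gamma2 m q.1.1 q.1.2⟩)) = if q = p then 1 else 0 := by
  rw [ellAdd_apply, map_commutatorElement, Heis.commutator_c, phi_of, phi_of]
  have hp := p.2
  have hq := q.2
  have hne : q = p ↔ (q.1.1 = p.1.1 ∧ q.1.2 = p.1.2) := by
    constructor
    · rintro rfl; exact ⟨rfl, rfl⟩
    · rintro ⟨h1, h2⟩; exact Subtype.ext (Prod.ext h1 h2)
  by_cases h1 : q.1.1 = p.1.1 <;> by_cases h2 : q.1.2 = p.1.2 <;>
    simp only [h1, h2, if_pos, if_neg, hne] <;> split_ifs <;>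
    simp_all <;> omega

end Part2

section Part3
open FreeGroup

variable {m : ℕ}

lemma lcs_succ_comm (G : Type*) [Group G] (n : ℕ) :
    (⊤ : Subgroup G).lowerCentralSeries (n + 1) = ⁅(⊤ : Subgroup G).lowerCentralSeries n, ⊤⁆ := rfl

def commSet (m : ℕ) : Set (FreeGroup (Fin m)) :=
  {x | ∃ r s : Fin m, s < r ∧ x = ⁅FreeGroup.of r, FreeGroup.of s⁆}

def W (m : ℕ) : Subgroup (FreeGroup (Fin m)) :=
  Subgroup.closure (commSet m) ⊔ (⊤ : Subgroup (FreeGroup (Fin m))).lowerCentralSeries 2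

lemma commutator_mem_gamma1 (g h : FreeGroup (Fin m)) :
    ⁅g, h⁆ ∈ (⊤ : Subgroup (FreeGroup (Fin m))).lowerCentralSeries 1 := by
  rw [lcs_succ_comm]
  exact Subgroup.commutator_mem_commutator (by simp [Subgroup.lowerCentralSeries_zero])
    (Subgroup.mem_top _)

lemma comm_gamma2_left {x : FreeGroup (Fin m)}
    (hx : x ∈ (⊤ : Subgroup (FreeGroup (Fin m))).lowerCentralSeries 1) (g : FreeGroup (Fin m)) :
    ⁅x, g⁆ ∈ (⊤ : Subgroup (FreeGroup (Fin m))).lowerCentralSeries 2 := by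
  rw [lcs_succ_comm]
  exact Subgroup.commutator_mem_commutator hx (Subgroup.mem_top _)

lemma comm_gamma2_right (g : FreeGroup (Fin m)) {x : FreeGroup (Fin m)}
    (hx : x ∈ (⊤ : Subgroup (FreeGroup (Fin m))).lowerCentralSeries 1) :
    ⁅g, x⁆ ∈ (⊤ : Subgroup (FreeGroup (Fin m))).lowerCentralSeries 2 := by
  rw [← commutatorElement_inv]
  exact inv_mem (comm_gamma2_left hx g)

lemma conj_mem_W {x : FreeGroup (Fin m)} (hx : x ∈ W m)
    (hx1 : x ∈ (⊤ : Subgroup (FreeGroup (Fin m))).lowerCentralSeries 1) (g : FreeGroup (Fin m)) :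
    g * x * g⁻¹ ∈ W m := by
  have h : g * x * g⁻¹ = ⁅g, x⁆ * x := by group
  rw [h]
  exact mul_mem ((le_sup_right : _ ≤ W m) (comm_gamma2_right g hx1)) hx

lemma W_inv_left {g h : FreeGroup (Fin m)} (hW : ⁅g, h⁆ ∈ W m) : ⁅g⁻¹, h⁆ ∈ W m := by
  have e : ⁅g⁻¹, h⁆ = g⁻¹ * ⁅g, h⁆⁻¹ * (g⁻¹)⁻¹ := by group
  rw [e]
  exact conj_mem_W (inv_mem hW) (inv_mem (commutator_mem_gamma1 g h)) g⁻¹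

lemma W_mul_left {a b h : FreeGroup (Fin m)} (ha : ⁅a, h⁆ ∈ W m) (hb : ⁅b, h⁆ ∈ W m) :
    ⁅a * b, h⁆ ∈ W m := by
  have e : ⁅a * b, h⁆ = (a * ⁅b, h⁆ * a⁻¹) * ⁅a, h⁆ := by group
  rw [e]
  exact mul_mem (conj_mem_W hb (commutator_mem_gamma1 b h) a) ha

lemma W_inv_right {g h : FreeGroup (Fin m)} (hW : ⁅g, h⁆ ∈ W m) : ⁅g, h⁻¹⁆ ∈ W m := by
  have e : ⁅g, h⁻¹⁆ = h⁻¹ * ⁅g, h⁆⁻¹ * (h⁻¹)⁻¹ := by group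
  rw [e]
  exact conj_mem_W (inv_mem hW) (inv_mem (commutator_mem_gamma1 g h)) h⁻¹

lemma W_mul_right {g h₁ h₂ : FreeGroup (Fin m)} (h1 : ⁅g, h₁⁆ ∈ W m) (h2 : ⁅g, h₂⁆ ∈ W m) :
    ⁅g, h₁ * h₂⁆ ∈ W m := by
  have e : ⁅g, h₁ * h₂⁆ = ⁅g, h₁⁆ * (h₁ * ⁅g, h₂⁆ * h₁⁻¹) := by group
  rw [e]
  exact mul_mem h1 (conj_mem_W h2 (commutator_mem_gamma1 g h₂) h₁)

lemma of_of_mem_W (r s : Fin m) : ⁅FreeGroup.of r, FreeGroup.of s⁆ ∈ W m := by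
  rcases lt_trichotomy s r with h | h | h
  · exact (le_sup_left : _ ≤ W m) (Subgroup.subset_closure ⟨r, s, h, rfl⟩)
  · subst h
    have e : ⁅FreeGroup.of s, FreeGroup.of s⁆ = 1 := by group
    rw [e]; exact one_mem _
  · rw [← commutatorElement_inv]
    exact inv_mem ((le_sup_left : _ ≤ W m) (Subgroup.subset_closure ⟨s, r, h, rfl⟩))

lemma comm_mem_W (g h : FreeGroup (Fin m)) : ⁅g, h⁆ ∈ W m := by
  induction g using FreeGroup.induction_on generalizing h with
  | C1 =>
    have e : ⁅(1 : FreeGroup (Fin m)), h⁆ = 1 := by group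
    rw [e]; exact one_mem _
  | of r =>
    show ⁅FreeGroup.of r, h⁆ ∈ W m
    induction h using FreeGroup.induction_on with
    | C1 =>
      have e : ⁅(FreeGroup.of r : FreeGroup (Fin m)), (1 : FreeGroup (Fin m))⁆ = 1 := by group
      rw [e]; exact one_mem _
    | of s => exact of_of_mem_W r s
    | inv_of s ih => exact W_inv_right ih
    | mul h₁ h₂ ih₁ ih₂ => exact W_mul_right ih₁ ih₂
  | inv_of r ih => exact W_inv_left (ih h)
  | mul g₁ g₂ ih₁ ih₂ => exact W_mul_left (ih₁ h) (ih₂ h)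


lemma gamma1_le_W : (⊤ : Subgroup (FreeGroup (Fin m))).lowerCentralSeries 1 ≤ W m := by
  rw [lcs_succ_comm, Subgroup.lowerCentralSeries_zero]
  exact Subgroup.commutator_le.mpr fun g _ h _ => comm_mem_W g h

end Part3

section Part4
open FreeGroup

variable {m : ℕ}

noncomputable def vElt (q : {p : Fin m × Fin m // p.2 < p.1}) : Gamma2ModGamma3 m :=
  QuotientGroup.mk
    ⟨⁅FreeGroup.of q.1.1, FreeGroup.of q.1.2⁆, of_commutator_mem_gamma2 m q.1.1 q.1.2⟩

lemma closure_vElt_top : Subgroup.closure (Set.range (vElt (m := m))) = ⊤ := by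
  rw [eq_top_iff]
  set N1 := (⊤ : Subgroup (FreeGroup (Fin m))).lowerCentralSeries 1 with hN1
  set T := Subgroup.closure (Set.range (vElt (m := m))) with hT
  set U : Subgroup (FreeGroup (Fin m)) :=
    Subgroup.map N1.subtype
      (T.comap (QuotientGroup.mk'
        (((⊤ : Subgroup (FreeGroup (Fin m))).lowerCentralSeries 2).subgroupOf N1))) with hU
  have hWU : W m ≤ U := by
    apply sup_le
    · rw [Subgroup.closure_le]
      rintro x ⟨r, s, hrs, rfl⟩
      exact ⟨⟨_, of_commutator_mem_gamma2 m r s⟩,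
        Subgroup.subset_closure ⟨⟨(r, s), hrs⟩, rfl⟩, rfl⟩
    · intro x hx
      have hx1 : x ∈ N1 := Subgroup.lowerCentralSeries_antitone _ (by norm_num) hx
      refine ⟨⟨x, hx1⟩, ?_, rfl⟩
      have h1 : (QuotientGroup.mk' (((⊤ : Subgroup (FreeGroup (Fin m))).lowerCentralSeries 2).subgroupOf N1))
          (⟨x, hx1⟩ : N1) = 1 := by
        rw [QuotientGroup.mk'_apply, QuotientGroup.eq_one_iff, Subgroup.mem_subgroupOf]
        exact hx
      simp only [SetLike.mem_coe, Subgroup.mem_comap, h1]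
      exact one_mem _
  intro q _
  obtain ⟨x, rfl⟩ := QuotientGroup.mk'_surjective
    (((⊤ : Subgroup (FreeGroup (Fin m))).lowerCentralSeries 2).subgroupOf N1) q
  have hxU : (x : FreeGroup (Fin m)) ∈ U := hWU (gamma1_le_W x.2)
  obtain ⟨y, hy, hyx⟩ := hxU
  have hyeq : y = x := Subtype.ext hyx
  rw [← hyeq]
  exact hy

end Part4

/-- Let `F` be the free group on `x₁,…,x_m` (`m ≥ 2`).  The classes of the commutators
`[x_r, x_s]` with `r > s` form a ℤ-basis of the free abelian group `Γ²F/Γ³F`; in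
particular the latter is free abelian of rank `m(m-1)/2`. -/
theorem basis_gamma2_mod_gamma3 (hm : 2 ≤ m) :
    ∃ b : Module.Basis {p : Fin m × Fin m // p.2 < p.1} ℤ (Additive (Gamma2ModGamma3 m)),
      ∀ p : {p : Fin m × Fin m // p.2 < p.1},
        b p = Additive.ofMul (α := Gamma2ModGamma3 m)
          (QuotientGroup.mk ⟨⁅FreeGroup.of p.1.1, FreeGroup.of p.1.2⁆,
            of_commutator_mem_gamma2 m p.1.1 p.1.2⟩) := by
  classical
  set v : {p : Fin m × Fin m // p.2 < p.1} → Additive (Gamma2ModGamma3 m) :=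
    fun q => Additive.ofMul (vElt q) with hv
  have hspan : ⊤ ≤ Submodule.span ℤ (Set.range v) := by
    intro a _
    have key : ∀ x, x ∈ Subgroup.closure (Set.range (vElt (m := m))) →
        Additive.ofMul x ∈ Submodule.span ℤ (Set.range v) := by
      intro x hx
      induction hx using Subgroup.closure_induction with
      | mem y hy =>
        obtain ⟨q, rfl⟩ := hy
        exact Submodule.subset_span ⟨q, rfl⟩
      | one => exact Submodule.zero_mem _
      | mul y z _ _ hy hz => exact Submodule.add_mem _ hy hz
      | inv y _ hy => exact Submodule.neg_mem _ hy
    have ha : Additive.toMul a ∈ Subgroup.closure (Set.range (vElt (m := m))) := by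
      rw [closure_vElt_top]; trivial
    exact key _ ha
  have hval : ∀ p q : {p : Fin m × Fin m // p.2 < p.1},
      ellAdd q.1 (v p) = if p = q then 1 else 0 := by
    intro p q
    exact ellAdd_commutator q p
  have hli : LinearIndependent ℤ v := by
    rw [Fintype.linearIndependent_iff]
    intro c hc q
    have h2 := congrArg (ellAdd (m := m) q.1) hc
    rw [map_sum, map_zero] at h2
    have h3 : ∀ p, ellAdd (m := m) q.1 (c p • v p) = if p = q then c p else 0 := by
      intro p
      rw [AddMonoidHom.map_zsmul, hval, smul_eq_mul, mul_ite, mul_one, mul_zero]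
    simp only [h3, Finset.sum_ite_eq', Finset.mem_univ, if_true] at h2
    exact h2
  exact ⟨Module.Basis.mk hli hspan, fun p => Module.Basis.mk_apply hli hspan p⟩

end
end

section
/- Let R be a commutative ring, J an ideal, K^i the level-J^i congruence subgroup of GL_n(R), and for A ∈ K^i write A ≡ I + Ā with Ā ∈ M_n(J^i/J^{i+1}). Then for A ∈ K^i and B ∈ K^j, the commutator [A,B] lies in K^{i+j} and its leading term in M_n(J^{i+j}/J^{i+j+1}) equals the matrix commutator ĀB̄ - B̄Ā. -/
open Matrix
open scoped commutatorElement

lemma entry_mul_mem_pow {R : Type} [CommRing R] {n : ℕ} {J : Ideal R} {p q : ℕ}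
    {X Y : Matrix (Fin n) (Fin n) R}
    (hX : ∀ k l, X k l ∈ J ^ p) (hY : ∀ k l, Y k l ∈ J ^ q) :
    ∀ k l, (X * Y) k l ∈ J ^ (p + q) := by
  intro k l
  rw [Matrix.mul_apply, pow_add]
  exact Ideal.sum_mem _ fun m _ => Ideal.mul_mem_mul (hX k m) (hY m l)

lemma entry_mul_mem_right {R : Type} [CommRing R] {n : ℕ} {I : Ideal R}
    {X Y : Matrix (Fin n) (Fin n) R}
    (hY : ∀ k l, Y k l ∈ I) :
    ∀ k l, (X * Y) k l ∈ I := by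
  intro k l
  rw [Matrix.mul_apply]
  exact Ideal.sum_mem _ fun m _ => Ideal.mul_mem_left _ _ (hY m l)

lemma entry_mul_mem_left {R : Type} [CommRing R] {n : ℕ} {I : Ideal R}
    {X Y : Matrix (Fin n) (Fin n) R}
    (hX : ∀ k l, X k l ∈ I) :
    ∀ k l, (X * Y) k l ∈ I := by
  intro k l
  rw [Matrix.mul_apply]
  exact Ideal.sum_mem _ fun m _ => Ideal.mul_mem_right _ _ (hX k m)

/-- Let `R` be a commutative ring, `J` an ideal, and let `A ∈ K^i`, `B ∈ K^j` be
invertible matrices congruent to the identity mod `J^i`, resp. `J^j`.  Then the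
commutator `⁅A,B⁆ = ABA⁻¹B⁻¹` lies in `K^{i+j}`, and its leading term in
`M_n(J^{i+j}/J^{i+j+1})` is the matrix commutator `ĀB̄ - B̄Ā` of the leading terms:
entrywise, `⁅A,B⁆ - 1 ≡ (A-1)(B-1) - (B-1)(A-1) mod J^{i+j+1}`. -/
theorem commutator_leading_term (R : Type) [CommRing R] (n : ℕ) (J : Ideal R)
    (i j : ℕ) (hi : 1 ≤ i) (hj : 1 ≤ j) (A B : GL (Fin n) R)
    (hA : ∀ k l, (A : Matrix (Fin n) (Fin n) R) k l
        - (1 : Matrix (Fin n) (Fin n) R) k l ∈ J ^ i)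
    (hB : ∀ k l, (B : Matrix (Fin n) (Fin n) R) k l
        - (1 : Matrix (Fin n) (Fin n) R) k l ∈ J ^ j) :
    (∀ k l, ((⁅A, B⁆ : GL (Fin n) R) : Matrix (Fin n) (Fin n) R) k l
        - (1 : Matrix (Fin n) (Fin n) R) k l ∈ J ^ (i + j)) ∧
    (∀ k l, ((⁅A, B⁆ : GL (Fin n) R) : Matrix (Fin n) (Fin n) R) k l
        - (1 : Matrix (Fin n) (Fin n) R) k l
        - ((((A : Matrix (Fin n) (Fin n) R) - 1) * ((B : Matrix (Fin n) (Fin n) R) - 1)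
            - ((B : Matrix (Fin n) (Fin n) R) - 1) * ((A : Matrix (Fin n) (Fin n) R) - 1))
            k l)
        ∈ J ^ (i + j + 1)) := by
  set M : Matrix (Fin n) (Fin n) R := (A : Matrix (Fin n) (Fin n) R) with hM
  set N : Matrix (Fin n) (Fin n) R := (B : Matrix (Fin n) (Fin n) R) with hN
  set M' : Matrix (Fin n) (Fin n) R := ((A⁻¹ : GL (Fin n) R) : Matrix (Fin n) (Fin n) R) with hM'
  set N' : Matrix (Fin n) (Fin n) R := ((B⁻¹ : GL (Fin n) R) : Matrix (Fin n) (Fin n) R) with hN'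
  have hMM' : M * M' = 1 := by
    rw [hM, hM', ← Units.val_mul, mul_inv_cancel, Units.val_one]
  have hM'M : M' * M = 1 := by
    rw [hM, hM', ← Units.val_mul, inv_mul_cancel, Units.val_one]
  have hNN' : N * N' = 1 := by
    rw [hN, hN', ← Units.val_mul, mul_inv_cancel, Units.val_one]
  have hN'N : N' * N = 1 := by
    rw [hN, hN', ← Units.val_mul, inv_mul_cancel, Units.val_one]
  have hcomm : ((⁅A, B⁆ : GL (Fin n) R) : Matrix (Fin n) (Fin n) R) = M * N * M' * N' := by
    rw [commutatorElement_def, hM, hN, hM', hN', Units.val_mul, Units.val_mul, Units.val_mul]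
  set a : Matrix (Fin n) (Fin n) R := M - 1 with ha
  set b : Matrix (Fin n) (Fin n) R := N - 1 with hb
  set c : Matrix (Fin n) (Fin n) R := M' * N' - 1 with hc
  have ha' : ∀ k l, a k l ∈ J ^ i := by
    intro k l; simpa [ha, Matrix.sub_apply] using hA k l
  have hb' : ∀ k l, b k l ∈ J ^ j := by
    intro k l; simpa [hb, Matrix.sub_apply] using hB k l
  have hM'1 : ∀ k l, (M' - 1) k l ∈ J ^ i := by
    have h : M' - 1 = M' * (1 - M) := by rw [mul_sub, mul_one, hM'M]
    intro k l
    rw [h]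
    exact entry_mul_mem_right (fun k l => by
      have := (J ^ i).neg_mem (ha' k l)
      simpa [ha, Matrix.sub_apply, neg_sub] using this) k l
  have hN'1 : ∀ k l, (N' - 1) k l ∈ J ^ j := by
    have h : N' - 1 = N' * (1 - N) := by rw [mul_sub, mul_one, hN'N]
    intro k l
    rw [h]
    exact entry_mul_mem_right (fun k l => by
      have := (J ^ j).neg_mem (hb' k l)
      simpa [hb, Matrix.sub_apply, neg_sub] using this) k l
  have hc' : ∀ k l, c k l ∈ J := by
    have h : c = (M' - 1) * N' + (N' - 1) := by rw [hc]; noncomm_ring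
    intro k l
    rw [h, Matrix.add_apply]
    refine J.add_mem ?_ ?_
    · exact entry_mul_mem_left (fun k l => Ideal.pow_le_self (by omega) (hM'1 k l)) k l
    · exact Ideal.pow_le_self (by omega) (hN'1 k l)
  have hab : ∀ k l, (a * b - b * a) k l ∈ J ^ (i + j) := by
    intro k l
    rw [Matrix.sub_apply]
    exact sub_mem (entry_mul_mem_pow ha' hb' k l)
      (by rw [Nat.add_comm i j]; exact entry_mul_mem_pow hb' ha' k l)
  have key : M * N * M' * N' - 1 = (a * b - b * a) + (a * b - b * a) * c := by
    have h1 : M * N - N * M = a * b - b * a := by rw [ha, hb]; noncomm_ring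
    have h2 : (N * M) * (M' * N') = 1 := by
      rw [mul_assoc N M, ← mul_assoc M M', hMM', one_mul, hNN']
    calc M * N * M' * N' - 1 = (M * N) * (M' * N') - (N * M) * (M' * N') := by
          rw [h2, mul_assoc, mul_assoc]
      _ = (M * N - N * M) * (M' * N') := by rw [sub_mul]
      _ = (a * b - b * a) * (1 + c) := by rw [h1, hc]; noncomm_ring
      _ = (a * b - b * a) + (a * b - b * a) * c := by noncomm_ring
  have habc : ∀ k l, ((a * b - b * a) * c) k l ∈ J ^ (i + j + 1) := by
    intro k l
    have h := entry_mul_mem_pow (q := 1) hab (fun k l => by simpa using hc' k l) k l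
    exact h
  constructor
  · intro k l
    rw [hcomm]
    have : (M * N * M' * N' - 1) k l ∈ J ^ (i + j) := by
      rw [key, Matrix.add_apply]
      exact add_mem (hab k l) (Ideal.pow_le_pow_right (by omega) (habc k l))
    simpa [Matrix.sub_apply] using this
  · intro k l
    rw [hcomm]
    have h2 : (M * N * M' * N' - 1) k l - (a * b - b * a) k l ∈ J ^ (i + j + 1) := by
      rw [key, Matrix.add_apply, add_sub_cancel_left]
      exact habc k l
    simpa [Matrix.sub_apply, ha, hb, hM, hN] using h2
end

section
/- Let F be a free group and s ≥ 5. Then [Γ^{s-2}F, Γ²F] · Γ^{s+1}F is a normal subgroup of Γ^sF, and the quotient Γ^sF / ([Γ^{s-2}F,Γ²F]·Γ^{s+1}F) is generated by the images of the s-fold left-normed commutators […[[x_{ℓ₁},x_{ℓ₂}],x_{ℓ₃}],…,x_{ℓ_s}] in the generators x_j of F. -/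
open scoped commutatorElement

/-- The left-normed iterated commutator of a list of group elements:
`lnc [a] = a`, `lnc [a, b] = ⁅a, b⁆`, `lnc (a :: rest) = […[⁅a, b⁆, c], …]`. -/
def lnc {G : Type} [Group G] : List G → G
  | [] => 1
  | a :: rest => rest.foldl (fun c x => ⁅c, x⁆) a

section Aux

variable {G : Type} [Group G]

lemma lcs_succ (G : Type) [Group G] (n : ℕ) :
    (⊤ : Subgroup G).lowerCentralSeries (n + 1) = ⁅(⊤ : Subgroup G).lowerCentralSeries n, ⊤⁆ := rfl

lemma foldl_comm_mem : ∀ (L : List G) (a : G) (k : ℕ), a ∈ (⊤ : Subgroup G).lowerCentralSeries k →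
    L.foldl (fun c x => ⁅c, x⁆) a ∈ (⊤ : Subgroup G).lowerCentralSeries (k + L.length) := by
  intro L
  induction L with
  | nil => intro a k ha; simpa using ha
  | cons x L ih =>
    intro a k ha
    have hx : ⁅a, x⁆ ∈ (⊤ : Subgroup G).lowerCentralSeries (k + 1) := by
      rw [lcs_succ]
      exact Subgroup.commutator_mem_commutator ha (Subgroup.mem_top x)
    have h2 := ih ⁅a, x⁆ (k + 1) hx
    have he : k + 1 + L.length = k + (x :: L).length := by simp; omega
    rw [he] at h2
    simpa using h2

lemma lnc_ofFn_mem (n : ℕ) (ℓ : Fin (n + 1) → G) :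
    lnc (List.ofFn ℓ) ∈ (⊤ : Subgroup G).lowerCentralSeries n := by
  rw [List.ofFn_succ]
  have := foldl_comm_mem (List.ofFn fun i : Fin n => ℓ i.succ) (ℓ 0) 0
    (by rw [lowerCentralSeries_zero]; trivial)
  simpa [lnc] using this

lemma lnc_cons_concat (a : G) (L : List G) (x : G) :
    lnc ((a :: L).concat x) = ⁅lnc (a :: L), x⁆ := by
  simp [lnc, List.concat_eq_append, List.foldl_append]

lemma lnc_snoc (n : ℕ) (ℓ : Fin (n + 1) → G) (x : G) :
    lnc (List.ofFn (Fin.snoc ℓ x)) = ⁅lnc (List.ofFn ℓ), x⁆ := by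
  have h1 : List.ofFn (Fin.snoc ℓ x) = (List.ofFn ℓ).concat x := by
    rw [List.ofFn_succ']
    simp
  rw [h1, List.ofFn_succ, lnc_cons_concat, ← List.ofFn_succ]

/-- Three subgroups lemma with target a normal subgroup. -/
lemma three_subgroups {A B C N : Subgroup G} [N.Normal]
    (h1 : ⁅⁅B, C⁆, A⁆ ≤ N) (h2 : ⁅⁅C, A⁆, B⁆ ≤ N) : ⁅⁅A, B⁆, C⁆ ≤ N := by
  have key : ∀ X Y Z : Subgroup G, ⁅⁅X, Y⁆, Z⁆ ≤ N ↔
      ⁅⁅X.map (QuotientGroup.mk' N), Y.map (QuotientGroup.mk' N)⁆,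
        Z.map (QuotientGroup.mk' N)⁆ = ⊥ := by
    intro X Y Z
    rw [← Subgroup.map_commutator, ← Subgroup.map_commutator,
      Subgroup.map_eq_bot_iff, QuotientGroup.ker_mk']
  rw [key]
  exact Subgroup.commutator_commutator_eq_bot_of_rotate
    ((key _ _ _).mp h1) ((key _ _ _).mp h2)

lemma lcs_comm_le : ∀ k m : ℕ,
    ⁅(⊤ : Subgroup G).lowerCentralSeries m, (⊤ : Subgroup G).lowerCentralSeries k⁆ ≤ (⊤ : Subgroup G).lowerCentralSeries (m + k + 1) := by
  intro k
  induction k with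
  | zero =>
    intro m
    rw [lowerCentralSeries_zero, ← lcs_succ]
  | succ k ih =>
    intro m
    rw [lcs_succ G k, Subgroup.commutator_comm]
    have e : m + (k + 1) + 1 = m + 1 + k + 1 := by omega
    rw [e]
    refine three_subgroups ?_ ?_
    · rw [Subgroup.commutator_comm (⊤ : Subgroup G), ← lcs_succ]
      exact ih (m + 1)
    · calc ⁅⁅(⊤ : Subgroup G).lowerCentralSeries m, (⊤ : Subgroup G).lowerCentralSeries k⁆, (⊤ : Subgroup G)⁆
          ≤ ⁅(⊤ : Subgroup G).lowerCentralSeries (m + k + 1), (⊤ : Subgroup G)⁆ :=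
            Subgroup.commutator_mono (ih m) le_rfl
        _ = (⊤ : Subgroup G).lowerCentralSeries (m + k + 2) := (lcs_succ G (m + k + 1)).symm
        _ ≤ (⊤ : Subgroup G).lowerCentralSeries (m + 1 + k + 1) := by
            apply lowerCentralSeries_antitone; omega

end Aux

lemma gamma_key (α : Type) (n : ℕ) :
    (⊤ : Subgroup (FreeGroup α)).lowerCentralSeries n =
      (⊤ : Subgroup (FreeGroup α)).lowerCentralSeries (n + 1) ⊔
        Subgroup.closure
          {c : FreeGroup α | ∃ ℓ : Fin (n + 1) → α,
            c = lnc (List.ofFn fun i => FreeGroup.of (ℓ i))} := by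
  induction n with
  | zero =>
    rw [lowerCentralSeries_zero]
    refine le_antisymm ?_ le_top
    rw [← FreeGroup.closure_range_of α]
    refine le_sup_of_le_right (Subgroup.closure_mono ?_)
    rintro _ ⟨a, rfl⟩
    exact ⟨fun _ => a, by simp [lnc]⟩
  | succ n ih =>
    set F := FreeGroup α
    set S : Set F := {c : F | ∃ ℓ : Fin (n + 1 + 1) → α,
      c = lnc (List.ofFn fun i => FreeGroup.of (ℓ i))} with hS
    set K : Subgroup F := (⊤ : Subgroup F).lowerCentralSeries (n + 1 + 1) ⊔ Subgroup.closure S with hKdef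
    have hSle : ∀ c ∈ S, c ∈ (⊤ : Subgroup F).lowerCentralSeries (n + 1) := by
      rintro c ⟨ℓ, rfl⟩
      exact lnc_ofFn_mem _ _
    -- K is normal
    have hK : K = Subgroup.closure (((⊤ : Subgroup F).lowerCentralSeries (n + 1 + 1) : Set F) ∪ S) := by
      rw [Subgroup.closure_union, Subgroup.closure_eq]
    haveI hKn : K.Normal := by
      constructor
      intro x hx g
      rw [hK] at hx ⊢
      induction hx using Subgroup.closure_induction with
      | mem y hy =>
        rcases hy with hy | hy
        · exact Subgroup.subset_closure
            (Or.inl ((Subgroup.lowerCentralSeries_normal ⊤ (n + 1 + 1)).conj_mem y hy g))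
        · have h1 : y ∈ Subgroup.closure (((⊤ : Subgroup F).lowerCentralSeries (n + 1 + 1) : Set F) ∪ S) :=
            Subgroup.subset_closure (Or.inr hy)
          have h2 : ⁅y⁻¹, g⁆ ∈ Subgroup.closure
              (((⊤ : Subgroup F).lowerCentralSeries (n + 1 + 1) : Set F) ∪ S) := by
            refine Subgroup.subset_closure (Or.inl ?_)
            rw [lcs_succ]
            exact Subgroup.commutator_mem_commutator (inv_mem (hSle y hy)) (Subgroup.mem_top g)
          have he : g * y * g⁻¹ = y * ⁅y⁻¹, g⁆ := by
            rw [commutatorElement_def]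
            exact (by intro g y; group : ∀ g y : FreeGroup α, g * y * g⁻¹ = y * (y⁻¹ * g * y⁻¹⁻¹ * g⁻¹)) g y
          rw [he]
          exact mul_mem h1 h2
      | one => simpa using one_mem _
      | mul y z _ _ hy hz =>
        have he : g * (y * z) * g⁻¹ = (g * y * g⁻¹) * (g * z * g⁻¹) :=
          (by intro g y z; group : ∀ g y z : FreeGroup α, g * (y * z) * g⁻¹ = (g * y * g⁻¹) * (g * z * g⁻¹)) g y z
        rw [he]; exact mul_mem hy hz
      | inv y _ hy =>
        have he : g * y⁻¹ * g⁻¹ = (g * y * g⁻¹)⁻¹ :=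
          (by intro g y; group : ∀ g y : FreeGroup α, g * y⁻¹ * g⁻¹ = (g * y * g⁻¹)⁻¹) g y
        rw [he]; exact inv_mem hy
    -- the two inclusions
    refine le_antisymm ?_ (sup_le (Subgroup.lowerCentralSeries_antitone _ (by omega))
      ((Subgroup.closure_le _).mpr hSle))
    rw [lcs_succ]
    rw [Subgroup.commutator_le]
    intro a ha g _
    set π := QuotientGroup.mk' K with hπ
    have hker : ∀ x : F, x ∈ K ↔ π x = 1 := by
      intro x
      exact (QuotientGroup.eq_one_iff x).symm
    have main : (⊤ : Subgroup F).lowerCentralSeries n ≤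
        Subgroup.comap π (Subgroup.centralizer {π g}) := by
      rw [ih]
      apply sup_le
      · intro b hb
        have hbg : ⁅b, g⁆ ∈ K := by
          refine (le_sup_left : (⊤ : Subgroup F).lowerCentralSeries (n + 1 + 1) ≤ K) ?_
          rw [lcs_succ]
          exact Subgroup.commutator_mem_commutator hb (Subgroup.mem_top g)
        rw [hker, map_commutatorElement, commutatorElement_eq_one_iff_mul_comm] at hbg
        simp only [Subgroup.mem_comap, Subgroup.mem_centralizer_iff,
          Set.mem_singleton_iff]
        rintro y rfl
        exact hbg.symm
      · rw [Subgroup.closure_le]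
        rintro _ ⟨ℓ, rfl⟩
        set c : F := lnc (List.ofFn fun i => FreeGroup.of (ℓ i)) with hc
        have hgen : ∀ x : α, π (FreeGroup.of x) * π c = π c * π (FreeGroup.of x) := by
          intro x
          have hcx : ⁅c, FreeGroup.of x⁆ ∈ K := by
            refine (le_sup_right : Subgroup.closure S ≤ K) ?_
            refine Subgroup.subset_closure ⟨Fin.snoc ℓ x, ?_⟩
            have hlist : List.ofFn (fun i : Fin (n + 1 + 1) => FreeGroup.of (Fin.snoc ℓ x i)) =
                (List.ofFn fun i => FreeGroup.of (ℓ i)).concat (FreeGroup.of x) := by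
              rw [List.ofFn_succ']
              simp
            rw [hlist, List.ofFn_succ, lnc_cons_concat,
              ← List.ofFn_succ (f := fun i : Fin (n + 1) => FreeGroup.of (ℓ i)), hc]
          rw [hker, map_commutatorElement, commutatorElement_eq_one_iff_mul_comm] at hcx
          exact hcx.symm
        have htop : (⊤ : Subgroup F) ≤ Subgroup.comap π (Subgroup.centralizer {π c}) := by
          rw [← FreeGroup.closure_range_of α, Subgroup.closure_le]
          rintro _ ⟨x, rfl⟩
          simp only [Set.mem_preimage, SetLike.mem_coe, Subgroup.mem_comap,
            Subgroup.mem_centralizer_iff, Set.mem_singleton_iff]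
          rintro y rfl
          exact (hgen x).symm
        have hg2 := htop (Subgroup.mem_top g)
        simp only [Subgroup.mem_comap, Subgroup.mem_centralizer_iff,
          Set.mem_singleton_iff] at hg2
        show c ∈ Subgroup.comap π (Subgroup.centralizer {π g})
        simp only [Subgroup.mem_comap, Subgroup.mem_centralizer_iff,
          Set.mem_singleton_iff]
        rintro y rfl
        exact (hg2 (π c) rfl).symm
    have hag := main ha
    simp only [Subgroup.mem_comap, Subgroup.mem_centralizer_iff,
      Set.mem_singleton_iff] at hag
    rw [hker, map_commutatorElement, commutatorElement_eq_one_iff_mul_comm]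
    exact (hag (π g) rfl).symm

/-- Let `F` be a free group on generators `x_j` and `s ≥ 5`.  Then
`H = [Γ^{s-2}F, Γ²F] ⬝ Γ^{s+1}F` is a normal subgroup of `Γ^sF`, and the quotient
`Γ^sF / H` is generated by the images of the `s`-fold left-normed commutators
`[…[[x_{ℓ₁},x_{ℓ₂}],x_{ℓ₃}],…,x_{ℓ_s}]`: equivalently, `Γ^sF` is generated by `H`
together with the `s`-fold left-normed commutators of generators.
Here `Γ^i F = (⊤ : Subgroup F).lowerCentralSeries (i-1)`. -/
theorem gamma_s_generated_by_lnc (α : Type) (s : ℕ) (hs : 5 ≤ s) :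
    (((⁅(⊤ : Subgroup (FreeGroup α)).lowerCentralSeries (s - 3), (⊤ : Subgroup (FreeGroup α)).lowerCentralSeries 1⁆ ⊔
        (⊤ : Subgroup (FreeGroup α)).lowerCentralSeries s).subgroupOf
          ((⊤ : Subgroup (FreeGroup α)).lowerCentralSeries (s - 1))).Normal) ∧
    (⊤ : Subgroup (FreeGroup α)).lowerCentralSeries (s - 1) =
      (⁅(⊤ : Subgroup (FreeGroup α)).lowerCentralSeries (s - 3), (⊤ : Subgroup (FreeGroup α)).lowerCentralSeries 1⁆ ⊔
        (⊤ : Subgroup (FreeGroup α)).lowerCentralSeries s) ⊔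
      Subgroup.closure
        {c : FreeGroup α | ∃ ℓ : Fin s → α,
          c = lnc (List.ofFn fun i => FreeGroup.of (ℓ i))} := by
  obtain ⟨m, rfl⟩ : ∃ m, s = m + 5 := ⟨s - 5, by omega⟩
  have e1 : m + 5 - 1 = m + 4 := by omega
  have e3 : m + 5 - 3 = m + 2 := by omega
  rw [e1, e3]
  constructor
  · exact Subgroup.Normal.subgroupOf inferInstance _
  · have hk : (⊤ : Subgroup (FreeGroup α)).lowerCentralSeries (m + 4) =
        (⊤ : Subgroup (FreeGroup α)).lowerCentralSeries (m + 5) ⊔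
          Subgroup.closure
            {c : FreeGroup α | ∃ ℓ : Fin (m + 5) → α,
              c = lnc (List.ofFn fun i => FreeGroup.of (ℓ i))} := gamma_key α (m + 4)
    rw [sup_assoc, ← hk]
    have hB : ⁅(⊤ : Subgroup (FreeGroup α)).lowerCentralSeries (m + 2),
        (⊤ : Subgroup (FreeGroup α)).lowerCentralSeries 1⁆ ≤ (⊤ : Subgroup (FreeGroup α)).lowerCentralSeries (m + 4) :=
      lcs_comm_le 1 (m + 2)
    exact (sup_of_le_right hB).symm
end
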